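/- Let q be a prime power, let a, b, c, d ∈ F_q with c ≠ 0 and ad − bc ≠ 0, and suppose the Möbius transformation φ(x) = (ax+b)/(cx+d) has order r+1 in PGL₂(F_q), where r ≥ 1. Let σ be the F_q-algebra automorphism of the rational function field F_q(X) determined by σ(X) = (aX+b)/(cX+d), and set h = Σ_{i=0}^{r} σ^i(X) ∈ F_q(X). Then: (1) writing h = N/D with N, D ∈ F_q[X] coprime, one has max(deg N, deg D) = r+1, i.e., deg h = r+1; and (2) the fixed field of the cyclic group ⟨σ⟩ inside F_q(X) is exactly the intermediate field F_q(h) generated by h over F_q; in particular the extension F_q(X)/F_q(h) is Galois with Galois group ⟨σ⟩ cyclic of order r+1. -/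

import Mathlib

open Polynomial

namespace Stmt11Aux

variable {F : Type*} [Field F]

/-- linear polynomial `e X + f` -/
noncomputable def lin (e f : F) : F[X] := Polynomial.C e * Polynomial.X + Polynomial.C f

lemma lin_ne_zero {e f : F} (h : ¬(e = 0 ∧ f = 0)) : lin e f ≠ 0 := by
  intro h0
  apply h
  have h1 : (lin e f).coeff 1 = e := by simp [lin, coeff_one]
  have h2 : (lin e f).coeff 0 = f := by simp [lin]
  rw [h0] at h1 h2
  simp at h1 h2
  exact ⟨h1.symm, h2.symm⟩

lemma natDegree_lin_le (e f : F) : (lin e f).natDegree ≤ 1 := natDegree_linear_le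

lemma natDegree_lin {e : F} (he : e ≠ 0) (f : F) : (lin e f).natDegree = 1 :=
  natDegree_linear he

lemma algebraMap_lin (e f : F) :
    algebraMap F[X] (RatFunc F) (lin e f)
      = algebraMap F (RatFunc F) e * RatFunc.X + algebraMap F (RatFunc F) f := by
  simp [lin, map_add, map_mul, RatFunc.algebraMap_C, RatFunc.algebraMap_X,
    RatFunc.algebraMap_eq_C]

/-- the Möbius transformation associated to a matrix -/
noncomputable def mo (N : Matrix (Fin 2) (Fin 2) F) : RatFunc F :=
  algebraMap F[X] (RatFunc F) (lin (N 0 0) (N 0 1)) /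
    algebraMap F[X] (RatFunc F) (lin (N 1 0) (N 1 1))

lemma row1_ne_zero {N : Matrix (Fin 2) (Fin 2) F} (h : N.det ≠ 0) :
    lin (N 1 0) (N 1 1) ≠ 0 := by
  refine lin_ne_zero fun ⟨h1, h2⟩ => h ?_
  rw [Matrix.det_fin_two, h1, h2]
  ring

lemma lin_comb (x y e f g k : F) :
    Polynomial.C x * lin e f + Polynomial.C y * lin g k = lin (x*e + y*g) (x*f + y*k) := by
  simp only [lin, map_add, map_mul]
  ring

lemma mo_comp (N P : Matrix (Fin 2) (Fin 2) F) (hN : N.det ≠ 0) (hP : P.det ≠ 0) :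
    (RatFunc.C (N 0 0) * mo P + RatFunc.C (N 0 1)) /
      (RatFunc.C (N 1 0) * mo P + RatFunc.C (N 1 1)) = mo (N * P) := by
  set A := algebraMap F[X] (RatFunc F) with hA
  have hDP : A (lin (P 1 0) (P 1 1)) ≠ 0 := RatFunc.algebraMap_ne_zero (row1_ne_zero hP)
  have hmoP : mo P * A (lin (P 1 0) (P 1 1)) = A (lin (P 0 0) (P 0 1)) :=
    div_mul_cancel₀ _ hDP
  have key : ∀ x y : F, (RatFunc.C x * mo P + RatFunc.C y) * A (lin (P 1 0) (P 1 1))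
      = A (lin (x * P 0 0 + y * P 1 0) (x * P 0 1 + y * P 1 1)) := by
    intro x y
    have : (RatFunc.C x * mo P + RatFunc.C y) * A (lin (P 1 0) (P 1 1))
        = RatFunc.C x * (mo P * A (lin (P 1 0) (P 1 1)))
          + RatFunc.C y * A (lin (P 1 0) (P 1 1)) := by
      ring
    rw [this, hmoP, ← RatFunc.algebraMap_C x, ← RatFunc.algebraMap_C y, hA, ← map_mul, ← map_mul,
      ← map_add, lin_comb]
  have hNP : (N * P).det ≠ 0 := by
    rw [Matrix.det_mul]; exact mul_ne_zero hN hP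
  have hentry : ∀ i j, (N * P) i j = N i 0 * P 0 j + N i 1 * P 1 j := by
    intro i j
    rw [Matrix.mul_apply, Fin.sum_univ_two]
  have hv : (RatFunc.C (N 1 0) * mo P + RatFunc.C (N 1 1)) * A (lin (P 1 0) (P 1 1))
      = A (lin ((N*P) 1 0) ((N*P) 1 1)) := by
    rw [key, hentry 1 0, hentry 1 1]
  have hu : (RatFunc.C (N 0 0) * mo P + RatFunc.C (N 0 1)) * A (lin (P 1 0) (P 1 1))
      = A (lin ((N*P) 0 0) ((N*P) 0 1)) := by
    rw [key, hentry 0 0, hentry 0 1]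
  have hvne : (RatFunc.C (N 1 0) * mo P + RatFunc.C (N 1 1)) ≠ 0 := by
    intro h0
    rw [h0, zero_mul] at hv
    exact RatFunc.algebraMap_ne_zero (row1_ne_zero hNP) hv.symm
  conv_rhs => rw [mo]
  rw [← hA, ← hu, ← hv, mul_div_mul_right _ _ hDP]

lemma pow_affine (a b c d : F) : ∀ i : ℕ, ∃ α β : F,
    (!![a, b; c, d] : Matrix (Fin 2) (Fin 2) F) ^ i = α • !![a, b; c, d] + β • 1 := by
  intro i
  induction i with
  | zero => exact ⟨0, 1, by simp⟩
  | succ n ih =>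
    obtain ⟨α, β, hαβ⟩ := ih
    refine ⟨α * (a + d) + β, -(α * (a * d - b * c)), ?_⟩
    rw [pow_succ, hαβ]
    ext i j
    fin_cases i <;> fin_cases j <;>
      simp [Matrix.mul_apply, Fin.sum_univ_succ, Matrix.one_apply] <;> ring

lemma mo_one : mo (1 : Matrix (Fin 2) (Fin 2) F) = RatFunc.X := by
  rw [mo, Matrix.one_apply_eq, Matrix.one_apply_ne (by decide), Matrix.one_apply_ne (by decide),
    Matrix.one_apply_eq, algebraMap_lin, algebraMap_lin]
  simp

lemma sigma_lin (σ : RatFunc F ≃ₐ[F] RatFunc F) (e f : F) :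
    σ (algebraMap F[X] (RatFunc F) (lin e f))
      = RatFunc.C e * σ RatFunc.X + RatFunc.C f := by
  rw [algebraMap_lin, map_add, map_mul, AlgEquiv.commutes, AlgEquiv.commutes,
    RatFunc.algebraMap_eq_C]

lemma pow_X (a b c d : F) (hdet : a * d - b * c ≠ 0) (σ : RatFunc F ≃ₐ[F] RatFunc F)
    (hσ : σ RatFunc.X =
      (algebraMap F (RatFunc F) a * RatFunc.X + algebraMap F (RatFunc F) b) /
        (algebraMap F (RatFunc F) c * RatFunc.X + algebraMap F (RatFunc F) d)) :
    ∀ i : ℕ, (σ ^ i) RatFunc.X = mo ((!![a, b; c, d] : Matrix (Fin 2) (Fin 2) F) ^ i) := by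
  have hdetM : (!![a, b; c, d] : Matrix (Fin 2) (Fin 2) F).det ≠ 0 := by
    rw [Matrix.det_fin_two_of]; exact hdet
  have hσX : σ RatFunc.X = mo (!![a, b; c, d] : Matrix (Fin 2) (Fin 2) F) := by
    rw [hσ, mo, algebraMap_lin, algebraMap_lin]
    simp
  intro i
  induction i with
  | zero => rw [pow_zero, pow_zero, AlgEquiv.one_apply, mo_one]
  | succ n ih =>
    rw [pow_succ' σ n, AlgEquiv.mul_apply, ih, mo, map_div₀, sigma_lin, sigma_lin, hσX,
      mo_comp _ _ (by rw [Matrix.det_pow]; exact pow_ne_zero _ hdetM) hdetM, ← pow_succ]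

lemma algebraMap_eq_aeval (p : F[X]) :
    algebraMap F[X] (RatFunc F) p = Polynomial.aeval RatFunc.X p := by
  have : (IsScalarTower.toAlgHom F F[X] (RatFunc F)) = Polynomial.aeval RatFunc.X :=
    Polynomial.algHom_ext (by simp [RatFunc.algebraMap_X])
  exact DFunLike.congr_fun this p

lemma fix_X (τ : RatFunc F ≃ₐ[F] RatFunc F) (hτ : τ RatFunc.X = RatFunc.X) : τ = 1 := by
  have key : ∀ p : F[X], τ (algebraMap F[X] (RatFunc F) p) = algebraMap F[X] (RatFunc F) p := by
    intro p
    rw [algebraMap_eq_aeval]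
    have := Polynomial.aeval_algHom_apply τ.toAlgHom RatFunc.X p
    change Polynomial.aeval (τ RatFunc.X) p = τ (Polynomial.aeval RatFunc.X p) at this
    rw [← this, hτ]
  ext f
  conv_lhs => rw [← RatFunc.num_div_denom f]
  rw [map_div₀, key, key, RatFunc.num_div_denom]
  rfl

lemma entry_ne_zero (a b c d : F) (hc : c ≠ 0) (hdet : a * d - b * c ≠ 0)
    (σ : RatFunc F ≃ₐ[F] RatFunc F)
    (hσ : σ RatFunc.X =
      (algebraMap F (RatFunc F) a * RatFunc.X + algebraMap F (RatFunc F) b) /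
        (algebraMap F (RatFunc F) c * RatFunc.X + algebraMap F (RatFunc F) d))
    (r : ℕ) (hord : orderOf σ = r + 1) (i : ℕ) (h1 : 1 ≤ i) (h2 : i ≤ r) :
    ((!![a, b; c, d] : Matrix (Fin 2) (Fin 2) F) ^ i) 1 0 ≠ 0 := by
  have hdetM : (!![a, b; c, d] : Matrix (Fin 2) (Fin 2) F).det ≠ 0 := by
    rw [Matrix.det_fin_two_of]; exact hdet
  intro h0
  obtain ⟨α, β, hαβ⟩ := pow_affine a b c d i
  have hent : ((!![a, b; c, d] : Matrix (Fin 2) (Fin 2) F) ^ i) 1 0 = α * c := by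
    rw [hαβ]
    simp [Matrix.one_apply]
  have hα : α = 0 := by
    rw [h0] at hent
    rcases mul_eq_zero.mp hent.symm with h | h
    · exact h
    · exact absurd h hc
  rw [hα, zero_smul, zero_add] at hαβ
  have hβ : β ≠ 0 := by
    intro hβ0
    rw [hβ0, zero_smul] at hαβ
    have hd : ((!![a, b; c, d] : Matrix (Fin 2) (Fin 2) F) ^ i).det ≠ 0 := by
      rw [Matrix.det_pow]; exact pow_ne_zero _ hdetM
    rw [hαβ] at hd
    simp at hd
  have hmoX : mo ((!![a, b; c, d] : Matrix (Fin 2) (Fin 2) F) ^ i) = RatFunc.X := by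
    rw [hαβ, mo]
    have e00 : ((β • 1 : Matrix (Fin 2) (Fin 2) F)) 0 0 = β := by simp [Matrix.one_apply]
    have e01 : ((β • 1 : Matrix (Fin 2) (Fin 2) F)) 0 1 = 0 := by simp [Matrix.one_apply]
    have e10 : ((β • 1 : Matrix (Fin 2) (Fin 2) F)) 1 0 = 0 := by simp [Matrix.one_apply]
    have e11 : ((β • 1 : Matrix (Fin 2) (Fin 2) F)) 1 1 = β := by simp [Matrix.one_apply]
    rw [e00, e01, e10, e11, algebraMap_lin, algebraMap_lin, map_zero, zero_mul, zero_add,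
      add_zero, mul_comm, mul_div_assoc, div_self (by
        simpa using (RatFunc.algebraMap_ne_zero (Polynomial.C_ne_zero.mpr hβ) : _)), mul_one]
  have hfix : σ ^ i = 1 := fix_X _ (by rw [pow_X a b c d hdet σ hσ i, hmoX])
  have hdvd := orderOf_dvd_of_pow_eq_one hfix
  rw [hord] at hdvd
  have := Nat.le_of_dvd (by omega) hdvd
  omega

lemma intDegree_mo_le (N : Matrix (Fin 2) (Fin 2) F) (hdet : N.det ≠ 0) (hc : N 1 0 ≠ 0) :
    (mo N).intDegree ≤ 0 := by
  by_cases h0 : mo N = 0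
  · rw [h0, RatFunc.intDegree_zero]
  · have hq : algebraMap F[X] (RatFunc F) (lin (N 1 0) (N 1 1)) ≠ 0 :=
      RatFunc.algebraMap_ne_zero (row1_ne_zero hdet)
    have hmul : mo N * algebraMap F[X] (RatFunc F) (lin (N 1 0) (N 1 1))
        = algebraMap F[X] (RatFunc F) (lin (N 0 0) (N 0 1)) := div_mul_cancel₀ _ hq
    have hid := RatFunc.intDegree_mul h0 hq
    rw [hmul, RatFunc.intDegree_polynomial, RatFunc.intDegree_polynomial] at hid
    have hple : (lin (N 0 0) (N 0 1)).natDegree ≤ 1 := natDegree_lin_le _ _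
    have hqd : (lin (N 1 0) (N 1 1)).natDegree = 1 := natDegree_lin hc _
    omega

lemma intDegree_sum_le {ι : Type*} (s : Finset ι) (f : ι → RatFunc F)
    (hf : ∀ i ∈ s, (f i).intDegree ≤ 0) : (∑ i ∈ s, f i).intDegree ≤ 0 := by
  induction s using Finset.cons_induction with
  | empty => simp
  | cons a s ha ih =>
    rw [Finset.sum_cons]
    have hy : (∑ i ∈ s, f i).intDegree ≤ 0 :=
      ih fun i hi => hf i (Finset.mem_cons_of_mem hi)
    by_cases h0 : f a + ∑ i ∈ s, f i = 0
    · rw [h0, RatFunc.intDegree_zero]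
    by_cases hyz : (∑ i ∈ s, f i) = 0
    · rw [hyz, add_zero]
      exact hf a (Finset.mem_cons_self a s)
    exact le_trans (RatFunc.intDegree_add_le hyz h0)
      (max_le (hf a (Finset.mem_cons_self a s)) hy)

lemma sum_repr (n : ℕ) (p q : ℕ → F[X]) (hq0 : ∀ i, q i ≠ 0) (hp : ∀ i, (p i).natDegree ≤ 1)
    (hq : ∀ i, (q i).natDegree ≤ 1) :
    ∃ P Q : F[X], Q ≠ 0 ∧ P.natDegree ≤ n ∧ Q.natDegree ≤ n ∧
      ∑ i ∈ Finset.range n,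
          algebraMap F[X] (RatFunc F) (p i) / algebraMap F[X] (RatFunc F) (q i)
        = algebraMap F[X] (RatFunc F) P / algebraMap F[X] (RatFunc F) Q := by
  induction n with
  | zero => exact ⟨0, 1, one_ne_zero, by simp, by simp, by simp⟩
  | succ n ih =>
    obtain ⟨P, Q, hQ, hPd, hQd, hEq⟩ := ih
    refine ⟨P * q n + Q * p n, Q * q n, mul_ne_zero hQ (hq0 n), ?_, ?_, ?_⟩
    · exact le_trans (natDegree_add_le _ _) (max_le
        (le_trans (natDegree_mul_le) (by have := hq n; omega))
        (le_trans (natDegree_mul_le) (by have := hp n; omega)))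
    · exact le_trans (natDegree_mul_le) (by have := hq n; omega)
    · rw [Finset.sum_range_succ, hEq,
        div_add_div _ _ (RatFunc.algebraMap_ne_zero hQ) (RatFunc.algebraMap_ne_zero (hq0 n)),
        ← map_mul, ← map_mul, ← map_mul, ← map_add]

lemma adjoin_X_top (E : IntermediateField F (RatFunc F)) :
    IntermediateField.adjoin E {(RatFunc.X : RatFunc F)} = ⊤ := by
  rw [eq_top_iff]
  intro f _
  set S := IntermediateField.adjoin (↥E) {(RatFunc.X : RatFunc F)}
  have hX : (RatFunc.X : RatFunc F) ∈ S :=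
    IntermediateField.subset_adjoin _ _ rfl
  have poly_mem : ∀ p : F[X], algebraMap F[X] (RatFunc F) p ∈ S := by
    intro p
    rw [algebraMap_eq_aeval]
    have h1 : Polynomial.aeval (RatFunc.X : RatFunc F) p
        ∈ Algebra.adjoin F {(RatFunc.X : RatFunc F)} :=
      Polynomial.aeval_mem_adjoin_singleton F _
    have h2 : Algebra.adjoin F {(RatFunc.X : RatFunc F)}
        ≤ Subalgebra.restrictScalars F S.toSubalgebra := by
      apply Algebra.adjoin_le
      intro x hx
      rcases hx with rfl
      exact hX
    exact h2 h1
  rw [← RatFunc.num_div_denom f]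
  exact div_mem (poly_mem _) (poly_mem _)

lemma finrank_le_deg (h : RatFunc F) (h0 : h ≠ 0)
    (hdeg : h.denom.natDegree < h.num.natDegree) :
    FiniteDimensional (IntermediateField.adjoin F {h}) (RatFunc F) ∧
      Module.finrank (IntermediateField.adjoin F {h}) (RatFunc F) ≤ h.num.natDegree := by
  set E := IntermediateField.adjoin F {h} with hE
  have hhE : h ∈ E := IntermediateField.mem_adjoin_simple_self F h
  set h' : E := ⟨h, hhE⟩ with hh'
  set N' : Polynomial E := (h.num).map (algebraMap F E) with hN'
  set D' : Polynomial E := (h.denom).map (algebraMap F E) with hD'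
  set R : Polynomial E := N' - Polynomial.C h' * D' with hR
  set D := h.num.natDegree with hD
  have hinj : Function.Injective (algebraMap F E) := (algebraMap F ↥E).injective
  have hNdeg : N'.natDegree = D := natDegree_map_eq_of_injective hinj _
  have hDdeg : D'.natDegree = h.denom.natDegree := natDegree_map_eq_of_injective hinj _
  have hCD : (Polynomial.C h' * D').natDegree < D :=
    lt_of_le_of_lt (le_trans (natDegree_C_mul_le _ _) hDdeg.le) hdeg
  have hR0 : R ≠ 0 := by
    intro hzero
    have hcoeff : R.coeff D = algebraMap F E (h.num.coeff D) := by
      rw [hR, coeff_sub, coeff_eq_zero_of_natDegree_lt hCD, sub_zero, hN', coeff_map]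
    have hld : h.num.coeff D ≠ 0 := by
      rw [hD, ← Polynomial.leadingCoeff]
      exact leadingCoeff_ne_zero.mpr (RatFunc.num_ne_zero h0)
    rw [hzero, Polynomial.coeff_zero] at hcoeff
    exact hld (hinj (by rw [← hcoeff, map_zero]))
  have hRdeg : R.natDegree ≤ D := by
    refine le_trans (natDegree_sub_le _ _) (max_le hNdeg.le hCD.le)
  have haev : Polynomial.aeval (RatFunc.X : RatFunc F) R = 0 := by
    have hmapN : Polynomial.aeval (RatFunc.X : RatFunc F) N'
        = algebraMap F[X] (RatFunc F) h.num := by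
      rw [hN', Polynomial.aeval_map_algebraMap, ← algebraMap_eq_aeval]
    have hmapD : Polynomial.aeval (RatFunc.X : RatFunc F) D'
        = algebraMap F[X] (RatFunc F) h.denom := by
      rw [hD', Polynomial.aeval_map_algebraMap, ← algebraMap_eq_aeval]
    have hch' : Polynomial.aeval (RatFunc.X : RatFunc F) (Polynomial.C h') = h := by
      rw [Polynomial.aeval_C]
      rfl
    have hnd : h * (algebraMap F[X] (RatFunc F)) h.denom = algebraMap F[X] (RatFunc F) h.num := by
      exact (eq_div_iff (RatFunc.algebraMap_ne_zero h.denom_ne_zero)).mp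
        (RatFunc.num_div_denom h).symm
    rw [hR, map_sub, map_mul, hmapN, hmapD, hch', sub_eq_zero, hnd.symm]
  have hint : IsIntegral E (RatFunc.X : RatFunc F) :=
    (IsAlgebraic.isIntegral ⟨R, hR0, haev⟩)
  have htop : IntermediateField.adjoin E {(RatFunc.X : RatFunc F)} = ⊤ := adjoin_X_top E
  haveI hfd : FiniteDimensional E (IntermediateField.adjoin E {(RatFunc.X : RatFunc F)}) :=
    IntermediateField.adjoin.finiteDimensional hint
  rw [htop] at hfd
  haveI hfd2 : FiniteDimensional E (RatFunc F) :=
    (IntermediateField.topEquiv (F := ↥E) (E := RatFunc F)).toLinearEquiv.finiteDimensional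
  refine ⟨hfd2, ?_⟩
  have h1 : Module.finrank ↥E (RatFunc F)
      = Module.finrank ↥E (IntermediateField.adjoin E {(RatFunc.X : RatFunc F)}) := by
    rw [htop, IntermediateField.finrank_top']
  have h3 : (minpoly (↥E) (RatFunc.X : RatFunc F)).natDegree ≤ R.natDegree :=
    natDegree_le_of_dvd (minpoly.dvd _ _ haev) hR0
  rw [h1, IntermediateField.adjoin.finrank hint]
  omega

lemma galois_finish {F L : Type*} [Field F] [Field L] [Algebra F L]
    (σ : L ≃ₐ[F] L) (r : ℕ) (hord : orderOf σ = r + 1)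
    (E : IntermediateField F L)
    (hEK : E ≤ IntermediateField.fixedField (Subgroup.zpowers σ))
    [FiniteDimensional E L]
    (hle : Module.finrank E L ≤ r + 1) :
    IntermediateField.fixedField (Subgroup.zpowers σ) = E ∧ Module.finrank E L = r + 1 := by
  set K := IntermediateField.fixedField (Subgroup.zpowers σ) with hKdef
  have hfin : IsOfFinOrder σ := by
    rw [← orderOf_pos_iff, hord]; omega
  haveI : Finite (Subgroup.zpowers σ) := hfin.finite_zpowers
  haveI : Fintype (Subgroup.zpowers σ) := Fintype.ofFinite _
  haveI : FaithfulSMul (Subgroup.zpowers σ) L :=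
    ⟨fun {g1 g2} hgg => Subtype.ext (AlgEquiv.ext hgg)⟩
  have hcard : Fintype.card (Subgroup.zpowers σ) = r + 1 := by
    rw [← Nat.card_eq_fintype_card, Nat.card_zpowers, hord]
  have hK : Module.finrank K L = r + 1 := by
    rw [← hcard]
    exact FixedPoints.finrank_eq_card (Subgroup.zpowers σ) L
  have hmul := IntermediateField.relfinrank_mul_finrank_top hEK
  rw [hK] at hmul
  have hpos : 0 < Module.finrank E L := Module.finrank_pos
  have hone : IntermediateField.relfinrank E K = 1 := by
    set x := IntermediateField.relfinrank E K with hx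
    have hx0 : x ≠ 0 := by
      intro hz
      rw [hz, zero_mul] at hmul
      omega
    have hx2 : x < 2 := by
      by_contra hcon
      push_neg at hcon
      have : 2 * (r + 1) ≤ x * (r + 1) := Nat.mul_le_mul_right _ hcon
      omega
    omega
  have hEL : Module.finrank E L = r + 1 := by
    rw [hone, one_mul] at hmul
    omega
  have hbot : IntermediateField.extendScalars hEK = ⊥ := by
    rw [IntermediateField.relfinrank_eq_finrank_of_le hEK] at hone
    exact IntermediateField.finrank_eq_one_iff.mp hone
  have hKE : K ≤ E := by
    intro x hx
    have hx' : x ∈ IntermediateField.extendScalars hEK :=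
      (IntermediateField.mem_extendScalars hEK).mpr hx
    rw [hbot] at hx'
    obtain ⟨e, rfl⟩ := IntermediateField.mem_bot.mp hx'
    exact e.2
  exact ⟨le_antisymm hKE hEK, hEL⟩

end Stmt11Aux

open Stmt11Aux

/-- Let `φ(x) = (ax+b)/(cx+d)` (with `c ≠ 0`, `ad - bc ≠ 0`) be a non-affine Möbius
transformation of order `r+1` in `PGL₂(F_q)`, let `σ` be the `F_q`-algebra automorphism
of `F_q(X)` with `σ(X) = (aX+b)/(cX+d)`, and set `h = Σ_{i=0}^{r} σ^i(X)`.  Then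
`deg h = max(deg num h, deg denom h) = r + 1`, and the fixed field of `⟨σ⟩` in
`F_q(X)` is exactly `F_q(h)`; in particular `F_q(X)/F_q(h)` is Galois with cyclic
Galois group `⟨σ⟩` of order `r+1`. -/
theorem stmt11 {F : Type*} [Field F] [Fintype F]
    (a b c d : F) (hc : c ≠ 0) (hdet : a * d - b * c ≠ 0)
    (r : ℕ) (hr : 1 ≤ r)
    (σ : RatFunc F ≃ₐ[F] RatFunc F)
    (hσ : σ RatFunc.X =
      (algebraMap F (RatFunc F) a * RatFunc.X + algebraMap F (RatFunc F) b) /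
        (algebraMap F (RatFunc F) c * RatFunc.X + algebraMap F (RatFunc F) d))
    (hord : orderOf σ = r + 1)
    (h : RatFunc F) (hh : h = ∑ i ∈ Finset.range (r + 1), (σ ^ i) RatFunc.X) :
    max h.num.natDegree h.denom.natDegree = r + 1 ∧
    IntermediateField.fixedField (Subgroup.zpowers σ) = IntermediateField.adjoin F {h} := by
  set M : Matrix (Fin 2) (Fin 2) F := !![a, b; c, d] with hM
  have hdetM : M.det ≠ 0 := by rw [hM, Matrix.det_fin_two_of]; exact hdet
  have hdetMi : ∀ i : ℕ, (M ^ i).det ≠ 0 := fun i => by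
    rw [Matrix.det_pow]; exact pow_ne_zero _ hdetM
  have hpow := pow_X a b c d hdet σ hσ
  -- σ fixes h
  have hX0 : (σ ^ 0) RatFunc.X = RatFunc.X := by rw [pow_zero, AlgEquiv.one_apply]
  have hXr1 : (σ ^ (r + 1)) RatFunc.X = RatFunc.X := by
    rw [← hord, pow_orderOf_eq_one σ, AlgEquiv.one_apply]
  have hσh : σ h = h := by
    rw [hh, map_sum]
    have hterm : ∀ i ∈ Finset.range (r + 1),
        σ ((σ ^ i) RatFunc.X) = (σ ^ (i + 1)) RatFunc.X := fun i _ => by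
      rw [pow_succ', AlgEquiv.mul_apply]
    rw [Finset.sum_congr rfl hterm]
    have e1 := Finset.sum_range_succ' (fun i => (σ ^ i) RatFunc.X) (r + 1)
    have e2 := Finset.sum_range_succ (fun i => (σ ^ i) RatFunc.X) (r + 1)
    rw [e2, hXr1] at e1
    simp only [hX0] at e1
    exact (add_right_cancel e1).symm
  -- the fixed field contains E := F(h)
  set E := IntermediateField.adjoin F {h} with hE
  have hEK : E ≤ IntermediateField.fixedField (Subgroup.zpowers σ) := by
    rw [hE, IntermediateField.adjoin_le_iff]
    intro x hx
    rcases hx with rfl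
    have hstab : Subgroup.zpowers σ ≤ MulAction.stabilizer (RatFunc F ≃ₐ[F] RatFunc F) x :=
      Subgroup.zpowers_le.mpr hσh
    intro g
    exact hstab g.2
  -- intDegree of h is 1
  have hh2 : h = (∑ i ∈ Finset.range r, (σ ^ (i + 1)) RatFunc.X) + RatFunc.X := by
    rw [hh, Finset.sum_range_succ' (fun i => (σ ^ i) RatFunc.X) r, hX0]
  set s := ∑ i ∈ Finset.range r, (σ ^ (i + 1)) RatFunc.X with hs
  have hsdeg : s.intDegree ≤ 0 := by
    apply intDegree_sum_le
    intro i hi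
    rw [hpow (i + 1)]
    exact intDegree_mo_le _ (hdetMi (i + 1))
      (entry_ne_zero a b c d hc hdet σ hσ r hord (i + 1) (by omega)
        (by have := Finset.mem_range.mp hi; omega))
  have hXdeg : (RatFunc.X : RatFunc F).intDegree = 1 := RatFunc.intDegree_X
  have h0 : h ≠ 0 := by
    intro hzero
    have hXs : (RatFunc.X : RatFunc F) = -s := by
      rw [hh2] at hzero
      linear_combination hzero
    rw [hXs, RatFunc.intDegree_neg] at hXdeg
    omega
  have hdeg1 : h.intDegree = 1 := by
    by_cases hs0 : s = 0
    · rw [hh2, hs0, zero_add]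
      exact hXdeg
    · have hle1 : h.intDegree ≤ 1 := by
        rw [hh2]
        refine le_trans (RatFunc.intDegree_add_le RatFunc.X_ne_zero (by rw [← hh2]; exact h0)) ?_
        rw [hXdeg]
        exact max_le (le_trans hsdeg (by omega)) le_rfl
      have hge1 : 1 ≤ h.intDegree := by
        have hXeq : (RatFunc.X : RatFunc F) = h + -s := by
          rw [hh2]; ring
        have hne : h + -s ≠ 0 := by rw [← hXeq]; exact RatFunc.X_ne_zero
        have := RatFunc.intDegree_add_le (neg_ne_zero.mpr hs0) hne
        rw [← hXeq, hXdeg, RatFunc.intDegree_neg] at this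
        rcases max_cases h.intDegree s.intDegree with ⟨heq, _⟩ | ⟨heq, _⟩ <;> omega
      omega
  have hdeglt : h.denom.natDegree < h.num.natDegree := by
    rw [RatFunc.intDegree] at hdeg1
    omega
  -- upper bound on the degree of h
  have hDle : h.num.natDegree ≤ r + 1 := by
    obtain ⟨P, Q, hQ, hPd, hQd, hEq⟩ := sum_repr (r + 1)
      (fun i => lin ((M ^ i) 0 0) ((M ^ i) 0 1))
      (fun i => lin ((M ^ i) 1 0) ((M ^ i) 1 1))
      (fun i => row1_ne_zero (hdetMi i))
      (fun i => natDegree_lin_le _ _) (fun i => natDegree_lin_le _ _)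
    have hhPQ : h = algebraMap F[X] (RatFunc F) P / algebraMap F[X] (RatFunc F) Q := by
      rw [hh, ← hEq]
      exact Finset.sum_congr rfl fun i _ => by rw [hpow i]; rfl
    have hP0 : P ≠ 0 := by
      intro hP
      rw [hP, map_zero, zero_div] at hhPQ
      exact h0 hhPQ
    have hdvd : h.num ∣ P := by
      rw [hhPQ]
      exact RatFunc.num_div_dvd P hQ
    exact le_trans (natDegree_le_of_dvd hdvd hP0) hPd
  -- finish
  obtain ⟨hfd, hfr⟩ := finrank_le_deg h h0 hdeglt
  haveI := hfd
  obtain ⟨hKE, hEL⟩ := galois_finish σ r hord E hEK (le_trans hfr hDle)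
  have hnum : h.num.natDegree = r + 1 := by
    have h1 : r + 1 ≤ h.num.natDegree := hEL ▸ hfr
    omega
  constructor
  · rw [max_eq_left hdeglt.le, hnum]
  · exact hKE
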